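/- Let v be an n-dimensional unit vector with entries in D[ω] whose least δ-exponent k is positive. Then there exists a finite product G of matrices of the forms X_{[α,β]}, H_{[α,β]}, ω_{[α]} such that the least δ-exponent of Gv is strictly less than k. -/

import Mathlib

noncomputable section
open Complex

def ω : ℂ := Complex.exp (Real.pi * Complex.I / 4)

def δ : ℂ := 1 + ω

def inZω (x : ℂ) : Prop := ∃ a b c d : ℤ, x = a * ω^3 + b * ω^2 + c * ω + d

def inD (x : ℂ) : Prop := ∃ a : ℤ, ∃ n : ℕ, x = a / 2^n

def inDω (x : ℂ) : Prop :=
  ∃ a b c d : ℂ, inD a ∧ inD b ∧ inD c ∧ inD d ∧ x = a * ω^3 + b * ω^2 + c * ω + d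

def dvdZ (a b : ℂ) : Prop := ∃ t : ℂ, inZω t ∧ b = a * t

def isLde (n : ℕ) (k : ℕ) (v : Fin n → ℂ) : Prop :=
  (∀ i, inZω (δ^k * v i)) ∧ ∀ j : ℕ, j < k → ¬ (∀ i, inZω (δ^j * v i))

def Xmat (n : ℕ) (α β : Fin n) : Matrix (Fin n) (Fin n) ℂ :=
  Matrix.of fun i j =>
    if i = α then (if j = β then 1 else 0)
    else if i = β then (if j = α then 1 else 0)
    else if i = j then 1 else 0

def Hmat (n : ℕ) (α β : Fin n) : Matrix (Fin n) (Fin n) ℂ :=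
  Matrix.of fun i j =>
    if i = α ∧ j = α then (Real.sqrt 2 : ℂ)⁻¹
    else if i = α ∧ j = β then (Real.sqrt 2 : ℂ)⁻¹
    else if i = β ∧ j = α then (Real.sqrt 2 : ℂ)⁻¹
    else if i = β ∧ j = β then -(Real.sqrt 2 : ℂ)⁻¹
    else if i = j then 1 else 0

def Wmat (n : ℕ) (α : Fin n) : Matrix (Fin n) (Fin n) ℂ :=
  Matrix.of fun i j => if i = j then (if i = α then ω else 1) else 0

def gens (n : ℕ) : Set (Matrix (Fin n) (Fin n) ℂ) :=
  {M | (∃ α β : Fin n, α < β ∧ (M = Xmat n α β ∨ M = Hmat n α β)) ∨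
       (∃ α : Fin n, M = Wmat n α)}

lemma omega_eq : ω = ((Real.sqrt 2 / 2 : ℝ) : ℂ) * (1 + Complex.I) := by
  unfold ω
  rw [show ((Real.pi : ℂ) * Complex.I / 4) = ((Real.pi/4 : ℝ) : ℂ) * Complex.I by push_cast; ring]
  rw [Complex.exp_mul_I, ← Complex.ofReal_cos, ← Complex.ofReal_sin,
    Real.cos_pi_div_four, Real.sin_pi_div_four]
  push_cast
  ring

lemma s2_sq : ((Real.sqrt 2 : ℝ) : ℂ)^2 = 2 := by
  norm_cast
  rw [Real.sq_sqrt] <;> norm_num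

lemma omega_sq : ω^2 = Complex.I := by
  rw [omega_eq]
  push_cast
  linear_combination (1+Complex.I)^2/4 * s2_sq + (1/2) * Complex.I_sq

lemma omega_pow4 : ω^4 = -1 := by
  rw [show ω^4 = (ω^2)^2 by ring, omega_sq, Complex.I_sq]

lemma omega_pow8 : ω^8 = 1 := by
  rw [show ω^8 = (ω^4)^2 by ring, omega_pow4]; ring

lemma s2_eq : ((Real.sqrt 2 : ℝ) : ℂ) = ω - ω^3 := by
  rw [omega_eq]
  push_cast
  linear_combination (((Real.sqrt 2:ℝ):ℂ)*(1+Complex.I)^3/8) * s2_sq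
    + ((((Real.sqrt 2:ℝ):ℂ))*(3+Complex.I)/4) * Complex.I_sq

lemma conj_omega : (starRingEnd ℂ) ω = -ω^3 := by
  rw [omega_eq]
  simp only [map_mul, map_add, Complex.conj_I, Complex.conj_ofReal, map_one]
  push_cast
  linear_combination (((Real.sqrt 2:ℝ):ℂ)*(1+Complex.I)^3/8) * s2_sq
    + ((((Real.sqrt 2:ℝ):ℂ))*(3+Complex.I)/4) * Complex.I_sq

lemma delta_ne : δ ≠ 0 := by
  intro h
  have hω : ω = -1 := by unfold δ at h; linear_combination h
  have h1 : Complex.I = 1 := by rw [← omega_sq, hω]; ring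
  have := Complex.I_ne_zero
  have h2 := congrArg Complex.re h1
  simp at h2

lemma int_sqrt2_zero (p q : ℤ) (h : (p:ℝ) + (q:ℝ) * (Real.sqrt 2 / 2) = 0) :
    p = 0 ∧ q = 0 := by
  by_cases hq : q = 0
  · subst hq; simp at h; exact ⟨by exact_mod_cast h, rfl⟩
  · exfalso
    have hs : Real.sqrt 2 = ((-2 * p / q : ℚ) : ℝ) := by
      have hq' : (q:ℝ) ≠ 0 := Int.cast_ne_zero.mpr hq
      push_cast
      field_simp
      linarith
    exact irrational_sqrt_two ⟨(-2 * p / q : ℚ), hs.symm⟩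

lemma omega_cube : ω^3 = ((Real.sqrt 2 / 2 : ℝ) : ℂ) * (Complex.I - 1) := by
  rw [show ω^3 = ω^2 * ω by ring, omega_sq, omega_eq]
  linear_combination ((Real.sqrt 2 / 2 : ℝ) : ℂ) * Complex.I_sq

lemma indep (a b c d : ℤ) (h : (a:ℂ) * ω^3 + (b:ℂ) * ω^2 + (c:ℂ) * ω + (d:ℂ) = 0) :
    a = 0 ∧ b = 0 ∧ c = 0 ∧ d = 0 := by
  have hE : (a:ℂ) * ω^3 + (b:ℂ) * ω^2 + (c:ℂ) * ω + (d:ℂ)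
      = (((d:ℝ) + ((c:ℝ)-(a:ℝ)) * (Real.sqrt 2 / 2) : ℝ) : ℂ)
        + (((b:ℝ) + ((a:ℝ)+(c:ℝ)) * (Real.sqrt 2 / 2) : ℝ) : ℂ) * Complex.I := by
    rw [omega_cube, omega_sq, omega_eq]
    push_cast
    ring
  rw [hE] at h
  rw [Complex.ext_iff] at h
  simp only [Complex.add_re, Complex.add_im, Complex.ofReal_re, Complex.ofReal_im,
    Complex.mul_re, Complex.mul_im, Complex.I_re, Complex.I_im, Complex.zero_re,
    Complex.zero_im] at h
  obtain ⟨h1, h2⟩ := h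
  have e1 : (d:ℝ) + ((c:ℝ)-(a:ℝ)) * (Real.sqrt 2 / 2) = 0 := by push_cast at h1 ⊢; linarith
  have e2 : (b:ℝ) + ((a:ℝ)+(c:ℝ)) * (Real.sqrt 2 / 2) = 0 := by push_cast at h2 ⊢; linarith
  have r1 := int_sqrt2_zero d (c - a) (by push_cast; linarith)
  have r2 := int_sqrt2_zero b (a + c) (by push_cast; linarith)
  omega

lemma inZω_coords (a b c d : ℤ) : inZω ((a:ℂ) * ω^3 + b * ω^2 + c * ω + d) :=
  ⟨a, b, c, d, rfl⟩

lemma inZω_int (m : ℤ) : inZω (m:ℂ) := ⟨0, 0, 0, m, by push_cast; ring⟩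

lemma inZω_zero : inZω 0 := by simpa using inZω_int 0

lemma inZω_one : inZω 1 := by simpa using inZω_int 1

lemma inZω_omega : inZω ω := ⟨0, 0, 1, 0, by push_cast; ring⟩

lemma inZω_delta : inZω δ := ⟨0, 0, 1, 1, by unfold δ; push_cast; ring⟩

lemma inZω_add {x y : ℂ} (hx : inZω x) (hy : inZω y) : inZω (x + y) := by
  obtain ⟨a, b, c, d, rfl⟩ := hx
  obtain ⟨e, f, g, h, rfl⟩ := hy
  exact ⟨a+e, b+f, c+g, d+h, by push_cast; ring⟩

lemma inZω_neg {x : ℂ} (hx : inZω x) : inZω (-x) := by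
  obtain ⟨a, b, c, d, rfl⟩ := hx
  exact ⟨-a, -b, -c, -d, by push_cast; ring⟩

lemma inZω_sub {x y : ℂ} (hx : inZω x) (hy : inZω y) : inZω (x - y) := by
  simpa [sub_eq_add_neg] using inZω_add hx (inZω_neg hy)

lemma inZω_mul {x y : ℂ} (hx : inZω x) (hy : inZω y) : inZω (x * y) := by
  obtain ⟨a, b, c, d, rfl⟩ := hx
  obtain ⟨e, f, g, h, rfl⟩ := hy
  refine ⟨a*h + b*g + c*f + d*e, b*h + c*g + d*f - a*e, c*h + d*g - a*f - b*e,
    d*h - a*g - b*f - c*e, ?_⟩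
  push_cast
  linear_combination ((a:ℂ)*e*ω^2 + ((a:ℂ)*f + b*e)*ω + ((a:ℂ)*g + b*f + c*e)) * omega_pow4

lemma inZω_pow {x : ℂ} (hx : inZω x) (m : ℕ) : inZω (x^m) := by
  induction m with
  | zero => simpa using inZω_one
  | succ p ih => rw [pow_succ]; exact inZω_mul ih hx

lemma inZω_sum {s : Finset (Fin nn)} {f : Fin nn → ℂ} (h : ∀ i ∈ s, inZω (f i)) :
    inZω (∑ i ∈ s, f i) := by
  classical
  induction s using Finset.induction with
  | empty => simpa using inZω_zero
  | insert _ _ hni ih =>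
    rw [Finset.sum_insert hni]
    exact inZω_add (h _ (Finset.mem_insert_self _ _))
      (ih fun i hi => h i (Finset.mem_insert_of_mem hi))

lemma inZω_conj {x : ℂ} (hx : inZω x) : inZω ((starRingEnd ℂ) x) := by
  obtain ⟨a, b, c, d, rfl⟩ := hx
  refine ⟨-c, -b, -a, d, ?_⟩
  simp only [map_add, map_mul, map_pow, conj_omega, map_intCast]
  push_cast
  linear_combination ((b:ℂ)*ω^2 + (a:ℂ)*ω - (a:ℂ)*ω^5) * omega_pow4

-- key constants

lemma two_eq_delta : (2:ℂ) = δ * (1 - ω + ω^2 - ω^3) := by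
  unfold δ; linear_combination omega_pow4

lemma two_eq_delta2 : (2:ℂ) = δ^2 * (-1 + ω^2 - 2*ω^3) := by
  unfold δ; linear_combination (3 + 2*ω)*omega_pow4

lemma two_eq_delta3 : (2:ℂ) = δ^3 * (-2 + 2*ω - ω^2 - ω^3) := by
  unfold δ; linear_combination (4 + 4*ω + ω^2)*omega_pow4

lemma sqrt2_mu : ((Real.sqrt 2 : ℝ) : ℂ) * (1 + ω + ω^2) = δ^2 := by
  rw [s2_eq]; unfold δ; linear_combination (-ω - 1)*omega_pow4

lemma conj_delta : (starRingEnd ℂ) δ = -ω^3 * δ := by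
  unfold δ
  simp only [map_add, map_one, conj_omega]
  linear_combination omega_pow4

lemma dvd_delta_of_even (a b c d m : ℤ) (h : d - c + b - a = 2 * m) :
    dvdZ δ ((a:ℂ) * ω^3 + b * ω^2 + c * ω + d) := by
  refine ⟨(1 - ω + ω^2 - ω^3) * m + ((c:ℂ) - 2*b + 3*a) + ((b:ℂ) - 3*a) * δ + (a:ℂ) * δ^2,
    ?_, ?_⟩
  · refine inZω_add (inZω_add (inZω_add
      (inZω_mul ⟨-1, 1, -1, 1, by push_cast; ring⟩ (inZω_int m)) ?_) ?_) ?_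
    · exact ⟨0, 0, 0, c - 2*b + 3*a, by push_cast; ring⟩
    · exact inZω_mul ⟨0, 0, 0, b - 3*a, by push_cast; ring⟩ inZω_delta
    · exact inZω_mul (inZω_int a) (inZω_pow inZω_delta 2)
  · have hC : ((d:ℂ) - (c:ℂ) + (b:ℂ) - (a:ℂ)) = 2*(m:ℂ) := by
      exact_mod_cast congrArg (Int.cast : ℤ → ℂ) h
    unfold δ
    linear_combination hC + (m:ℂ)*omega_pow4

lemma key_residue {x : ℂ} (hx : inZω x) (hnd : ¬ dvdZ δ x) :
    ∃ p : ℕ, ∃ X : ℂ, inZω X ∧ x = ω^p + δ^3 * X := by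
  obtain ⟨a, b, c, d, rfl⟩ := hx
  rcases Int.even_or_odd (d - c + b - a) with ⟨m, hm⟩ | ⟨m, hm⟩
  · exact absurd (dvd_delta_of_even a b c d m (by linarith)) hnd
  · rcases Int.even_or_odd (c - 2*b + 3*a) with ⟨m1, hm1⟩ | ⟨m1, hm1⟩ <;>
      rcases Int.even_or_odd (b - 3*a) with ⟨m2, hm2⟩ | ⟨m2, hm2⟩
    · -- case (r1,r2) = (0,0)
      refine ⟨0, ((-m2 - 2*m1 - m:ℤ):ℂ) * ω^3 + ((m2 + m1 - m:ℤ):ℂ) * ω^2 + ((-m2 + 2*m:ℤ):ℂ) * ω + ((a + m2 - m1 - 2*m:ℤ):ℂ),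
        ⟨_, _, _, _, rfl⟩, ?_⟩
      have hmC : ((d:ℂ) - c + b - a) = 2*(m:ℂ)+1 := by
        exact_mod_cast congrArg (Int.cast : ℤ → ℂ) hm
      have h1C : ((c:ℂ) - 2*b + 3*a) = 2*(m1:ℂ)+0 := by
        exact_mod_cast congrArg (Int.cast : ℤ → ℂ) (show c - 2*b + 3*a = 2*m1+0 by linarith)
      have h2C : ((b:ℂ) - 3*a) = 2*(m2:ℂ)+0 := by
        exact_mod_cast congrArg (Int.cast : ℤ → ℂ) (show b - 3*a = 2*m2+0 by linarith)
      unfold δ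
      push_cast
      linear_combination hmC + (1+ω)*h1C + (1+ω)^2*h2C + ((m2:ℂ) + 2*m2*ω + m2*ω^2 + 3*m1 + 5*m1*ω + 2*m1*ω^2 + 4*m + 4*m*ω + m*ω^2)*omega_pow4
    · -- case (r1,r2) = (0,1)
      refine ⟨2, ((-2 -m2 - 2*m1 - m:ℤ):ℂ) * ω^3 + ((1 + m2 + m1 - m:ℤ):ℂ) * ω^2 + ((-m2 + 2*m:ℤ):ℂ) * ω + ((-1 + a + m2 - m1 - 2*m:ℤ):ℂ),
        ⟨_, _, _, _, rfl⟩, ?_⟩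
      have hmC : ((d:ℂ) - c + b - a) = 2*(m:ℂ)+1 := by
        exact_mod_cast congrArg (Int.cast : ℤ → ℂ) hm
      have h1C : ((c:ℂ) - 2*b + 3*a) = 2*(m1:ℂ)+0 := by
        exact_mod_cast congrArg (Int.cast : ℤ → ℂ) (show c - 2*b + 3*a = 2*m1+0 by linarith)
      have h2C : ((b:ℂ) - 3*a) = 2*(m2:ℂ)+1 := by
        exact_mod_cast congrArg (Int.cast : ℤ → ℂ) (show b - 3*a = 2*m2+1 by linarith)
      unfold δ
      push_cast
      linear_combination hmC + (1+ω)*h1C + (1+ω)^2*h2C + (3 + 5*ω + 2*ω^2 + (m2:ℂ) + 2*m2*ω + m2*ω^2 + 3*m1 + 5*m1*ω + 2*m1*ω^2 + 4*m + 4*m*ω + m*ω^2)*omega_pow4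
    · -- case (r1,r2) = (1,0)
      refine ⟨1, ((-1 -m2 - 2*m1 - m:ℤ):ℂ) * ω^3 + ((-1 + m2 + m1 - m:ℤ):ℂ) * ω^2 + ((2 -m2 + 2*m:ℤ):ℂ) * ω + ((-2 + a + m2 - m1 - 2*m:ℤ):ℂ),
        ⟨_, _, _, _, rfl⟩, ?_⟩
      have hmC : ((d:ℂ) - c + b - a) = 2*(m:ℂ)+1 := by
        exact_mod_cast congrArg (Int.cast : ℤ → ℂ) hm
      have h1C : ((c:ℂ) - 2*b + 3*a) = 2*(m1:ℂ)+1 := by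
        exact_mod_cast congrArg (Int.cast : ℤ → ℂ) (show c - 2*b + 3*a = 2*m1+1 by linarith)
      have h2C : ((b:ℂ) - 3*a) = 2*(m2:ℂ)+0 := by
        exact_mod_cast congrArg (Int.cast : ℤ → ℂ) (show b - 3*a = 2*m2+0 by linarith)
      unfold δ
      push_cast
      linear_combination hmC + (1+ω)*h1C + (1+ω)^2*h2C + (4 + 4*ω + ω^2 + (m2:ℂ) + 2*m2*ω + m2*ω^2 + 3*m1 + 5*m1*ω + 2*m1*ω^2 + 4*m + 4*m*ω + m*ω^2)*omega_pow4
    · -- case (r1,r2) = (1,1)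
      refine ⟨3, ((-1 -m2 - 2*m1 - m:ℤ):ℂ) * ω^3 + ((m2 + m1 - m:ℤ):ℂ) * ω^2 + ((-m2 + 2*m:ℤ):ℂ) * ω + ((a + m2 - m1 - 2*m:ℤ):ℂ),
        ⟨_, _, _, _, rfl⟩, ?_⟩
      have hmC : ((d:ℂ) - c + b - a) = 2*(m:ℂ)+1 := by
        exact_mod_cast congrArg (Int.cast : ℤ → ℂ) hm
      have h1C : ((c:ℂ) - 2*b + 3*a) = 2*(m1:ℂ)+1 := by
        exact_mod_cast congrArg (Int.cast : ℤ → ℂ) (show c - 2*b + 3*a = 2*m1+1 by linarith)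
      have h2C : ((b:ℂ) - 3*a) = 2*(m2:ℂ)+1 := by
        exact_mod_cast congrArg (Int.cast : ℤ → ℂ) (show b - 3*a = 2*m2+1 by linarith)
      unfold δ
      push_cast
      linear_combination hmC + (1+ω)*h1C + (1+ω)^2*h2C + (3 + 3*ω + ω^2 + (m2:ℂ) + 2*m2*ω + m2*ω^2 + 3*m1 + 5*m1*ω + 2*m1*ω^2 + 4*m + 4*m*ω + m*ω^2)*omega_pow4

lemma pair_combine {x y : ℂ} (hx : inZω x) (hnx : ¬ dvdZ δ x)
    (hy : inZω y) (hny : ¬ dvdZ δ y) :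
    ∃ a : ℕ, ∃ t u : ℂ, inZω t ∧ inZω u ∧
      x + ω^a * y = δ^3 * t ∧ x - ω^a * y = δ^3 * u := by
  obtain ⟨p, X, hX, hxe⟩ := key_residue hx hnx
  obtain ⟨q, Y, hY, hye⟩ := key_residue hy hny
  refine ⟨p + 8 - q % 8, ?_⟩
  set a := p + 8 - q % 8 with ha
  have hωa : ω^a * ω^q = ω^p := by
    have h8 : a + q = p + 8 * (1 + q / 8) := by omega
    rw [← pow_add, h8, pow_add, pow_mul, omega_pow8, one_pow, mul_one]
  refine ⟨X + ω^a * Y + (-2 + 2*ω - ω^2 - ω^3) * ω^p, X - ω^a * Y, ?_, ?_, ?_, ?_⟩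
  · exact inZω_add (inZω_add hX (inZω_mul (inZω_pow inZω_omega a) hY))
      (inZω_mul ⟨-1, -1, 2, -2, by push_cast; ring⟩ (inZω_pow inZω_omega p))
  · exact inZω_sub hX (inZω_mul (inZω_pow inZω_omega a) hY)
  · linear_combination hxe + ω^a*hye + hωa + ω^p*two_eq_delta3
  · linear_combination hxe - ω^a*hye - hωa

lemma Wmat_diag (n : ℕ) (α : Fin n) :
    Wmat n α = Matrix.diagonal (fun i => if i = α then ω else 1) := by
  ext i j
  by_cases h : i = j <;> simp [Wmat, Matrix.diagonal, h]

lemma Wpow_mulVec (n : ℕ) (α : Fin n) (a : ℕ) (w : Fin n → ℂ) (i : Fin n) :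
    ((Wmat n α)^a).mulVec w i = if i = α then ω^a * w i else w i := by
  rw [Wmat_diag, Matrix.diagonal_pow, Matrix.mulVec_diagonal]
  by_cases h : i = α <;> simp [h]

lemma sum_pair {n : ℕ} (α β : Fin n) (hαβ : α ≠ β) (c1 c2 : ℂ) (w : Fin n → ℂ) :
    ∑ j, (if j = α then c1 else if j = β then c2 else 0) * w j = c1 * w α + c2 * w β := by
  have h1 : ∀ j ∈ Finset.univ, (if j = α then c1 else if j = β then c2 else 0) * w j
      = (if j = α then c1 * w j else 0) + (if j = β then c2 * w j else 0) := by
    intro j _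
    by_cases hj1 : j = α <;> by_cases hj2 : j = β
    · exact absurd (hj1.symm.trans hj2) hαβ
    all_goals simp [hj1, hj2, hαβ, Ne.symm hαβ]
  rw [Finset.sum_congr rfl h1, Finset.sum_add_distrib, Finset.sum_ite_eq',
    Finset.sum_ite_eq']
  simp

lemma Hmat_mulVec (n : ℕ) (α β : Fin n) (hαβ : α ≠ β) (w : Fin n → ℂ) (i : Fin n) :
    (Hmat n α β).mulVec w i =
      if i = α then (Real.sqrt 2 : ℂ)⁻¹ * (w α + w β)
      else if i = β then (Real.sqrt 2 : ℂ)⁻¹ * (w α - w β)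
      else w i := by
  set r : ℂ := (Real.sqrt 2 : ℂ)⁻¹ with hr
  show ∑ j, Hmat n α β i j * w j = _
  by_cases hiα : i = α
  · subst hiα
    rw [if_pos rfl]
    have step : ∀ j ∈ Finset.univ, Hmat n i β i j * w j
        = (if j = i then r else if j = β then r else 0) * w j := by
      intro j _
      congr 1
      by_cases hj1 : j = i <;> by_cases hj2 : j = β <;>
        simp [Hmat, hj1, hj2, hαβ] <;> tauto
    rw [Finset.sum_congr rfl step, sum_pair i β hαβ]
    ring
  · by_cases hiβ : i = β
    · subst hiβ
      rw [if_neg hiα, if_pos rfl]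
      have step : ∀ j ∈ Finset.univ, Hmat n α i i j * w j
          = (if j = α then r else if j = i then -r else 0) * w j := by
        intro j _
        congr 1
        by_cases hj1 : j = α <;> by_cases hj2 : j = i <;>
          simp [Hmat, hj1, hj2, hiα] <;> tauto
      rw [Finset.sum_congr rfl step, sum_pair α i (fun h => hiα h.symm)]
      ring
    · rw [if_neg hiα, if_neg hiβ]
      have step : ∀ j ∈ Finset.univ, Hmat n α β i j * w j
          = (if j = i then (1:ℂ) else if j = α then 0 else 0) * w j := by
        intro j _
        congr 1
        by_cases hj1 : j = i <;> by_cases hj2 : j = α <;> by_cases hj3 : j = β <;>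
          simp [Hmat, hj1, hj2, hj3, hiα, hiβ, Ne.symm hiα, Ne.symm hiβ] <;> tauto
      rw [Finset.sum_congr rfl step]
      by_cases hiα2 : i = α
      · exact absurd hiα2 hiα
      · rw [sum_pair i α (fun h => hiα h)]
        ring

lemma s2C_ne : ((Real.sqrt 2 : ℝ) : ℂ) ≠ 0 := by
  simp only [ne_eq, Complex.ofReal_eq_zero]
  positivity

lemma pair_step (n : ℕ) (w : Fin n → ℂ) (α β : Fin n) (hαβ : α < β)
    (hall : ∀ i, inZω (w i))
    (hnα : ¬ dvdZ δ (w α)) (hnβ : ¬ dvdZ δ (w β)) :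
    ∃ L : List (Matrix (Fin n) (Fin n) ℂ), (∀ M ∈ L, M ∈ gens n) ∧
      (∀ i, i ≠ α → i ≠ β → L.prod.mulVec w i = w i) ∧
      dvdZ δ (L.prod.mulVec w α) ∧ dvdZ δ (L.prod.mulVec w β) := by
  have hne : α ≠ β := ne_of_lt hαβ
  obtain ⟨a, t, u, ht, hu, hsum, hdiff⟩ := pair_combine (hall α) hnα (hall β) hnβ
  refine ⟨Hmat n α β :: List.replicate a (Wmat n β), ?_, ?_, ?_, ?_⟩
  · intro M hM
    rcases List.mem_cons.mp hM with rfl | hM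
    · exact Or.inl ⟨α, β, hαβ, Or.inr rfl⟩
    · rw [List.eq_of_mem_replicate hM]
      exact Or.inr ⟨β, rfl⟩
  all_goals {
    rw [List.prod_cons, List.prod_replicate, ← Matrix.mulVec_mulVec]
    first
    | (intro i hiα hiβ
       rw [Hmat_mulVec n α β hne _ i, if_neg hiα, if_neg hiβ, Wpow_mulVec, if_neg hiβ])
    | (rw [Hmat_mulVec n α β hne _ α, if_pos rfl, Wpow_mulVec n β a w α, if_neg hne,
         Wpow_mulVec n β a w β, if_pos rfl, hsum]
       refine ⟨t * (1 + ω + ω^2), inZω_mul ht ⟨0,1,1,1, by push_cast; ring⟩, ?_⟩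
       apply mul_left_cancel₀ s2C_ne
       rw [← mul_assoc, mul_inv_cancel₀ s2C_ne, one_mul]
       linear_combination (-δ*t)*sqrt2_mu)
    | (rw [Hmat_mulVec n α β hne _ β, if_neg (Ne.symm hne), if_pos rfl,
         Wpow_mulVec n β a w α, if_neg hne, Wpow_mulVec n β a w β, if_pos rfl, hdiff]
       refine ⟨u * (1 + ω + ω^2), inZω_mul hu ⟨0,1,1,1, by push_cast; ring⟩, ?_⟩
       apply mul_left_cancel₀ s2C_ne
       rw [← mul_assoc, mul_inv_cancel₀ s2C_ne, one_mul]
       linear_combination (-δ*u)*sqrt2_mu) }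

lemma pair_step' (n : ℕ) (w : Fin n → ℂ) (α β : Fin n) (hne : α ≠ β)
    (hall : ∀ i, inZω (w i))
    (hnα : ¬ dvdZ δ (w α)) (hnβ : ¬ dvdZ δ (w β)) :
    ∃ L : List (Matrix (Fin n) (Fin n) ℂ), (∀ M ∈ L, M ∈ gens n) ∧
      (∀ i, i ≠ α → i ≠ β → L.prod.mulVec w i = w i) ∧
      dvdZ δ (L.prod.mulVec w α) ∧ dvdZ δ (L.prod.mulVec w β) := by
  rcases lt_or_gt_of_ne hne with h | h
  · exact pair_step n w α β h hall hnα hnβ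
  · obtain ⟨L, h1, h2, h3, h4⟩ := pair_step n w β α h hall hnβ hnα
    exact ⟨L, h1, fun i hiα hiβ => h2 i hiβ hiα, h4, h3⟩

lemma core (n : ℕ) (N : ℕ) : ∀ (B : Finset (Fin n)), B.card = N → Even N →
    ∀ w : Fin n → ℂ, (∀ i, inZω (w i)) → (∀ i, i ∉ B → dvdZ δ (w i)) →
    (∀ i ∈ B, ¬ dvdZ δ (w i)) →
    ∃ L : List (Matrix (Fin n) (Fin n) ℂ), (∀ M ∈ L, M ∈ gens n) ∧
      ∀ i, dvdZ δ (L.prod.mulVec w i) := by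
  induction N using Nat.strong_induction_on with
  | _ N ih =>
    intro B hBN hev w hall hout hin
    by_cases hN : N = 0
    · refine ⟨[], by simp, fun i => ?_⟩
      rw [List.prod_nil, Matrix.one_mulVec]
      exact hout i (by rw [Finset.card_eq_zero.mp (hBN.trans hN)]; exact Finset.notMem_empty i)
    · have hN2 : 2 ≤ N := by
        obtain ⟨r, rfl⟩ := hev; omega
      obtain ⟨α, hα⟩ := Finset.card_pos.mp (by omega : 0 < B.card)
      have h1 : 0 < (B.erase α).card := by
        rw [Finset.card_erase_of_mem hα]; omega
      obtain ⟨β, hβ⟩ := Finset.card_pos.mp h1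
      have hβα : β ≠ α := Finset.ne_of_mem_erase hβ
      have hβB : β ∈ B := Finset.mem_of_mem_erase hβ
      obtain ⟨L₁, hL₁g, hL₁fix, hL₁α, hL₁β⟩ :=
        pair_step' n w α β (Ne.symm hβα) hall (hin α hα) (hin β hβB)
      set w₁ := L₁.prod.mulVec w with hw₁
      set B₂ := (B.erase α).erase β with hB₂
      have hB₂card : B₂.card = N - 2 := by
        rw [hB₂, Finset.card_erase_of_mem hβ, Finset.card_erase_of_mem hα, hBN]
        omega
      have hev2 : Even (N - 2) := by
        obtain ⟨r, hr⟩ := hev; exact ⟨r - 1, by omega⟩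
      have hmem : ∀ i : Fin n, i ∈ B₂ → i ≠ α ∧ i ≠ β := by
        intro i hi
        exact ⟨Finset.ne_of_mem_erase (Finset.mem_of_mem_erase hi),
          Finset.ne_of_mem_erase hi⟩
      obtain ⟨L₂, hL₂g, hL₂dvd⟩ := ih (N - 2) (by omega) B₂ hB₂card hev2 w₁
        (fun i => by
          by_cases hiα : i = α
          · subst hiα; obtain ⟨t, ht, hte⟩ := hL₁α; rw [hte]; exact inZω_mul inZω_delta ht
          · by_cases hiβ : i = β
            · subst hiβ; obtain ⟨t, ht, hte⟩ := hL₁β; rw [hte]; exact inZω_mul inZω_delta ht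
            · rw [show w₁ i = w i from hL₁fix i hiα hiβ]; exact hall i)
        (fun i hi => by
          by_cases hiα : i = α
          · subst hiα; exact hL₁α
          · by_cases hiβ : i = β
            · subst hiβ; exact hL₁β
            · rw [show w₁ i = w i from hL₁fix i hiα hiβ]
              refine hout i (fun hiB => hi ?_)
              rw [hB₂]
              exact Finset.mem_erase.mpr ⟨hiβ, Finset.mem_erase.mpr ⟨hiα, hiB⟩⟩)
        (fun i hi => by
          obtain ⟨hiα, hiβ⟩ := hmem i hi
          rw [show w₁ i = w i from hL₁fix i hiα hiβ]
          exact hin i (Finset.mem_of_mem_erase (Finset.mem_of_mem_erase hi)))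
      refine ⟨L₂ ++ L₁, ?_, ?_⟩
      · intro M hM
        rcases List.mem_append.mp hM with h | h
        · exact hL₂g M h
        · exact hL₁g M h
      · intro i
        rw [List.prod_append, ← Matrix.mulVec_mulVec]
        exact hL₂dvd i

lemma even_of_delta2 (m : ℕ) (z : ℂ) (hz : inZω z) (h : (m:ℂ) = δ^2 * z) :
    Even m := by
  obtain ⟨A, Bc, C, D, rfl⟩ := hz
  unfold δ at h
  have h0 : ((A + 2*Bc + C : ℤ):ℂ)*ω^3 + ((Bc + 2*C + D:ℤ):ℂ)*ω^2
      + ((C + 2*D - A:ℤ):ℂ)*ω + ((D - 2*A - Bc - (m:ℤ):ℤ):ℂ) = 0 := by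
    push_cast
    linear_combination (-1 : ℂ) * h + (-((A:ℂ)*ω + Bc + 2*A))*omega_pow4
  obtain ⟨e1, e2, e3, e4⟩ := indep _ _ _ _ h0
  rw [Nat.even_iff]
  omega

lemma parity_even (n k : ℕ) (hk : 0 < k) (u : Fin n → ℂ) (hu : ∀ i, inZω (u i))
    (hsum : ∑ i, (starRingEnd ℂ) (u i) * u i = ((1 - ω^3) * (1 + ω))^k)
    (B : Finset (Fin n)) (hB : ∀ i, i ∈ B ↔ ¬ dvdZ δ (u i)) :
    Even B.card := by
  classical
  have hterm : ∀ i : Fin n, ∃ z : ℂ, inZω z ∧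
      (starRingEnd ℂ) (u i) * u i = (if i ∈ B then (1:ℂ) else 0) + δ^2 * z := by
    intro i
    by_cases hiB : i ∈ B
    · have hnd : ¬ dvdZ δ (u i) := (hB i).mp hiB
      obtain ⟨p, X, hX, hxe⟩ := key_residue (hu i) hnd
      set Xc := (starRingEnd ℂ) X with hXc
      have hA : (-ω^3 : ℂ)^p * ω^p = 1 := by
        rw [← mul_pow, show ((-ω^3 : ℂ))*ω = 1 from by linear_combination -omega_pow4,
          one_pow]
      have hcu : (starRingEnd ℂ) (u i) = (-ω^3)^p + (-ω^3*δ)^3 * Xc := by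
        rw [hxe, map_add, map_mul, map_pow, map_pow, conj_delta, conj_omega]
      refine ⟨δ*((-ω^3)^p*X - ω*ω^p*Xc - ω*δ^3*Xc*X), ?_, ?_⟩
      · refine inZω_mul inZω_delta (inZω_sub (inZω_sub
          (inZω_mul (inZω_pow (inZω_neg (inZω_pow inZω_omega 3)) p) hX)
          (inZω_mul (inZω_mul inZω_omega (inZω_pow inZω_omega p)) (inZω_conj hX)))
          (inZω_mul (inZω_mul (inZω_mul inZω_omega (inZω_pow inZω_delta 3))
            (inZω_conj hX)) hX))
      · rw [if_pos hiB, hcu, hxe]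
        linear_combination hA + (ω - ω^5)*(δ^3*Xc*ω^p + δ^6*Xc*X)*omega_pow4
    · have hd : dvdZ δ (u i) := by
        by_contra hc
        exact hiB ((hB i).mpr hc)
      obtain ⟨t, ht, hte⟩ := hd
      refine ⟨-ω^3 * ((starRingEnd ℂ) t) * t,
        inZω_mul (inZω_mul (inZω_neg (inZω_pow inZω_omega 3)) (inZω_conj ht)) ht, ?_⟩
      rw [if_neg hiB, hte, map_mul, conj_delta]
      ring
  choose z hz1 hz2 using hterm
  have hsum2 : ∑ i, (starRingEnd ℂ) (u i) * u i
      = (B.card : ℂ) + δ^2 * ∑ i, z i := by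
    rw [Finset.sum_congr rfl (fun i _ => hz2 i), Finset.sum_add_distrib,
      Finset.sum_boole, ← Finset.mul_sum]
    congr 1
    norm_num
  have hbase : ((1:ℂ) - ω^3) * (1 + ω) = δ^2 * (-ω^3) := by
    unfold δ
    linear_combination (1+ω)*omega_pow4
  have hRk : ((1:ℂ) - ω^3)^k * (1 + ω)^k = δ^2 * (δ^(2*(k-1)) * (-ω^3)^k) := by
    rw [← mul_pow, hbase, mul_pow, ← pow_mul,
      show 2*k = 2 + 2*(k-1) by omega, pow_add]
    ring
  have hfin : (B.card : ℂ) = δ^2 * (δ^(2*(k-1)) * (-ω^3)^k - ∑ i, z i) := by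
    have := hsum.symm.trans hsum2
    rw [mul_pow] at this
    rw [mul_sub]
    linear_combination -this + hRk
  exact even_of_delta2 B.card _ (inZω_sub
    (inZω_mul (inZω_pow inZω_delta _) (inZω_pow (inZω_neg (inZω_pow inZω_omega 3)) k))
    (inZω_sum (fun i _ => hz1 i))) hfin

theorem lde_reduction_step (n : ℕ) (v : Fin n → ℂ) (k : ℕ)
    (hD : ∀ i, inDω (v i))
    (hunit : (∑ i, (starRingEnd ℂ) (v i) * v i) = 1)
    (hlde : isLde n k v) (hk : 0 < k) :
    ∃ L : List (Matrix (Fin n) (Fin n) ℂ),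
      (∀ M ∈ L, M ∈ gens n) ∧
      ∃ k' : ℕ, k' < k ∧ isLde n k' (L.prod.mulVec v) := by
  classical
  have hu : ∀ i, inZω (δ^k * v i) := hlde.1
  have hsum : ∑ i, (starRingEnd ℂ) (δ^k * v i) * (δ^k * v i)
      = ((1 - ω^3) * (1 + ω))^k := by
    have hcd : (starRingEnd ℂ) δ = 1 - ω^3 := by
      unfold δ; rw [map_add, map_one, conj_omega]; ring
    calc ∑ i, (starRingEnd ℂ) (δ^k * v i) * (δ^k * v i)
        = ((1-ω^3)^k * (1+ω)^k) * ∑ i, (starRingEnd ℂ) (v i) * (v i) := by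
          rw [Finset.mul_sum]
          refine Finset.sum_congr rfl fun i _ => ?_
          rw [map_mul, map_pow, hcd]
          unfold δ
          ring
      _ = _ := by rw [hunit, mul_one, ← mul_pow]
  set B := Finset.univ.filter (fun i => ¬ dvdZ δ (δ^k * v i)) with hBdef
  have hBmem : ∀ i, i ∈ B ↔ ¬ dvdZ δ (δ^k * v i) := fun i => by simp [hBdef]
  have hev := parity_even n k hk (fun i => δ^k * v i) hu hsum B hBmem
  obtain ⟨L, hLg, hLdvd⟩ := core n B.card B rfl hev (fun i => δ^k * v i) hu
    (fun i hi => not_not.mp (fun hc => hi ((hBmem i).mpr hc)))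
    (fun i hi => (hBmem i).mp hi)
  have hmv : ∀ i, L.prod.mulVec (fun j => δ^k * v j) i
      = δ^k * (L.prod.mulVec v) i := by
    intro i
    have hs : (fun j => δ^k * v j) = (δ^k • v) := by
      funext j; simp [Pi.smul_apply, smul_eq_mul]
    rw [hs, Matrix.mulVec_smul]
    simp [Pi.smul_apply, smul_eq_mul]
  have hP : ∀ i, inZω (δ^(k-1) * (L.prod.mulVec v) i) := by
    intro i
    obtain ⟨t, ht, hte⟩ := hLdvd i
    rw [hmv i] at hte
    have hδ : δ^k = δ * δ^(k-1) := by
      rw [← pow_succ']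
      congr 1
      omega
    have hcanc : δ * (δ^(k-1) * (L.prod.mulVec v) i) = δ * t := by
      rw [← mul_assoc, ← hδ, hte]
    rw [mul_left_cancel₀ delta_ne hcanc]
    exact ht
  have hex : ∃ j : ℕ, ∀ i, inZω (δ^j * (L.prod.mulVec v) i) := ⟨k-1, hP⟩
  refine ⟨L, hLg, Nat.find hex,
    lt_of_le_of_lt (Nat.find_min' hex hP) (by omega),
    Nat.find_spec hex, fun j hj => Nat.find_min hex hj⟩
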